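/- On the hyperboloid model, the normal vectors satisfy B_κ^i(u) = −(1/r) θ^i(u) and B_{κi}(u) = (1/r†) η_i(u), so the model is a dual quadric hypersurface with k_0 l_0 = −1/(r r†); consequently H^{(1)}_{abκ}(u) = −(1/r†) g_{ab}(u), H^{(−1)}_{abκ}(u) = (1/r) g_{ab}(u), and R^{(±1)}_{abcd}(u) = −(1/(r r†))(g_{ad}g_{bc} − g_{ac}g_{bd}), with g_{11} = r r† and g_{ab} = δ_{ab} r r† sinh² u^1 ∏_{c=2}^a sin² u^{c−1} for a ≥ 2. -/

import Mathlib

noncomputable def pd {m : ℕ} (i : Fin m) (f : (Fin m → ℝ) → ℝ) (x : Fin m → ℝ) : ℝ :=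
  fderiv ℝ f x (Pi.single i 1)

namespace S18
open Real Finset

variable {m : ℕ}

lemma pd_congr {a : Fin m} {f g : (Fin m → ℝ) → ℝ} (h : ∀ v, f v = g v) (x : Fin m → ℝ) :
    pd a f x = pd a g x := by
  have : f = g := funext h
  rw [this]

lemma pd_const (a : Fin m) (c : ℝ) (x : Fin m → ℝ) : pd a (fun _ => c) x = 0 := by
  simp [pd]

lemma pd_mul {a : Fin m} {f g : (Fin m → ℝ) → ℝ} {x : Fin m → ℝ}
    (hf : DifferentiableAt ℝ f x) (hg : DifferentiableAt ℝ g x) :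
    pd a (fun u => f u * g u) x = pd a f x * g x + f x * pd a g x := by
  simp only [pd, fderiv_fun_mul hf hg, ContinuousLinearMap.add_apply,
    ContinuousLinearMap.smul_apply, smul_eq_mul]
  ring

lemma pd_const_mul {a : Fin m} {f : (Fin m → ℝ) → ℝ} {x : Fin m → ℝ}
    (hf : DifferentiableAt ℝ f x) (c : ℝ) :
    pd a (fun u => c * f u) x = c * pd a f x := by
  simp [pd, fderiv_const_mul hf c]

lemma pd_sum {a : Fin m} {ι : Type*} {t : Finset ι} {F : ι → (Fin m → ℝ) → ℝ} {x : Fin m → ℝ}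
    (hF : ∀ i ∈ t, DifferentiableAt ℝ (F i) x) :
    pd a (fun u => ∑ i ∈ t, F i u) x = ∑ i ∈ t, pd a (F i) x := by
  simp [pd, fderiv_fun_sum hF]

lemma diff_eval {e : Fin m} {h : ℝ → ℝ} (hh : Differentiable ℝ h) (x : Fin m → ℝ) :
    DifferentiableAt ℝ (fun u : Fin m → ℝ => h (u e)) x :=
  (hh (x e)).comp x
    (ContinuousLinearMap.proj (R := ℝ) (φ := fun _ : Fin m => ℝ) e).differentiableAt

lemma pd_eval (a e : Fin m) {h : ℝ → ℝ} (hh : Differentiable ℝ h) (x : Fin m → ℝ) :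
    pd a (fun u => h (u e)) x = if a = e then deriv h (x e) else 0 := by
  have hc : (fun u : Fin m → ℝ => h (u e)) =
      h ∘ (ContinuousLinearMap.proj (R := ℝ) (φ := fun _ : Fin m => ℝ) e) := rfl
  rw [pd, hc, fderiv_comp x (hh _) (ContinuousLinearMap.proj e).differentiableAt,
    ContinuousLinearMap.fderiv]
  simp only [ContinuousLinearMap.coe_comp', Function.comp_apply,
    ContinuousLinearMap.proj_apply, Pi.single_apply]
  rcases eq_or_ne a e with h1 | h1
  · subst h1; simp [fderiv_apply_one_eq_deriv]
  · simp [h1, Ne.symm h1]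

lemma diff_prod (S : Finset (Fin m)) (x : Fin m → ℝ) :
    DifferentiableAt ℝ (fun u : Fin m → ℝ => ∏ e ∈ S, Real.sin (u e)) x :=
  (HasFDerivAt.finset_prod
    (fun e _ => (diff_eval Real.differentiable_sin x).hasFDerivAt)).differentiableAt

lemma pd_prod (a : Fin m) (S : Finset (Fin m)) (x : Fin m → ℝ) :
    pd a (fun u => ∏ e ∈ S, Real.sin (u e)) x =
      if a ∈ S then Real.cos (x a) * ∏ e ∈ S.erase a, Real.sin (x e) else 0 := by
  have hdiff : ∀ e ∈ S, DifferentiableAt ℝ (fun u : Fin m → ℝ => Real.sin (u e)) x :=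
    fun e _ => diff_eval Real.differentiable_sin x
  have h0 : pd a (fun u => ∏ e ∈ S, Real.sin (u e)) x
      = ∑ e ∈ S, (∏ j ∈ S.erase e, Real.sin (x j)) * pd a (fun u => Real.sin (u e)) x := by
    simp [pd, fderiv_finset_prod hdiff]
  rw [h0]
  have h2 : ∀ e ∈ S, (∏ j ∈ S.erase e, Real.sin (x j)) * pd a (fun u => Real.sin (u e)) x
      = if a = e then Real.cos (x a) * ∏ j ∈ S.erase a, Real.sin (x j) else 0 := by
    intro e _
    rw [pd_eval a e Real.differentiable_sin x]
    rcases eq_or_ne a e with h1 | h1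
    · subst h1; simp [Real.deriv_sin, mul_comm]
    · simp [h1]
  rw [Finset.sum_congr rfl h2, Finset.sum_ite_eq S a _]

/-! Fin-level model functions -/

def FSn (m : ℕ) (n : ℕ) : Finset (Fin m) :=
  Finset.univ.filter (fun e : Fin m => 1 ≤ (e : ℕ) ∧ (e : ℕ) < n)

noncomputable def Cf (i : Fin (m + 1)) (u : Fin m → ℝ) : ℝ :=
  if h : (i : ℕ) < m then Real.cos (u ⟨i, h⟩) else 1

noncomputable def Xi (hm : 0 < m) (i : Fin (m + 1)) (u : Fin m → ℝ) : ℝ :=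
  if (i : ℕ) = 0 then Real.cosh (u ⟨0, hm⟩)
  else Real.sinh (u ⟨0, hm⟩) * (∏ e ∈ FSn m (i : ℕ), Real.sin (u e)) * Cf i u

noncomputable def DXi (hm : 0 < m) (a : Fin m) (i : Fin (m + 1)) (u : Fin m → ℝ) : ℝ :=
  if (i : ℕ) = 0 then (if (a : ℕ) = 0 then Real.sinh (u ⟨0, hm⟩) else 0)
  else if (a : ℕ) = 0 then
    Real.cosh (u ⟨0, hm⟩) * (∏ e ∈ FSn m (i : ℕ), Real.sin (u e)) * Cf i u
  else if (a : ℕ) < (i : ℕ) then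
    Real.sinh (u ⟨0, hm⟩) * (Real.cos (u a) * ∏ e ∈ (FSn m (i : ℕ)).erase a, Real.sin (u e))
      * Cf i u
  else if (a : ℕ) = (i : ℕ) then
    Real.sinh (u ⟨0, hm⟩) * (∏ e ∈ FSn m (i : ℕ), Real.sin (u e)) * (-Real.sin (u a))
  else 0

lemma diff_Cf (i : Fin (m + 1)) (x : Fin m → ℝ) : DifferentiableAt ℝ (Cf i) x := by
  by_cases h : (i : ℕ) < m
  · have : Cf (m := m) i = fun v => Real.cos (v ⟨i, h⟩) := by
      funext v; rw [Cf, dif_pos h]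
    rw [this]; exact diff_eval Real.differentiable_cos x
  · have : Cf (m := m) i = fun _ => (1 : ℝ) := by
      funext v; rw [Cf, dif_neg h]
    rw [this]; exact differentiableAt_const 1

lemma diff_Xi (hm : 0 < m) (i : Fin (m + 1)) (x : Fin m → ℝ) :
    DifferentiableAt ℝ (Xi hm i) x := by
  by_cases h : (i : ℕ) = 0
  · have : Xi hm i = fun v => Real.cosh (v ⟨0, hm⟩) := by
      funext v; rw [Xi, if_pos h]
    rw [this]; exact diff_eval Real.differentiable_cosh x
  · have : Xi hm i = fun v =>
        Real.sinh (v ⟨0, hm⟩) * (∏ e ∈ FSn m (i : ℕ), Real.sin (v e)) * Cf i v := by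
      funext v; rw [Xi, if_neg h]
    rw [this]
    exact ((diff_eval Real.differentiable_sinh x).mul (diff_prod _ x)).mul (diff_Cf i x)

lemma diff_DXi (hm : 0 < m) (a : Fin m) (i : Fin (m + 1)) (x : Fin m → ℝ) :
    DifferentiableAt ℝ (DXi hm a i) x := by
  by_cases h0 : (i : ℕ) = 0
  · by_cases ha : (a : ℕ) = 0
    · have : DXi hm a i = fun v => Real.sinh (v ⟨0, hm⟩) := by
        funext v; rw [DXi, if_pos h0, if_pos ha]
      rw [this]; exact diff_eval Real.differentiable_sinh x
    · have : DXi hm a i = fun _ => (0 : ℝ) := by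
        funext v; rw [DXi, if_pos h0, if_neg ha]
      rw [this]; exact differentiableAt_const 0
  · by_cases ha : (a : ℕ) = 0
    · have : DXi hm a i = fun v =>
          Real.cosh (v ⟨0, hm⟩) * (∏ e ∈ FSn m (i : ℕ), Real.sin (v e)) * Cf i v := by
        funext v; rw [DXi, if_neg h0, if_pos ha]
      rw [this]
      exact ((diff_eval Real.differentiable_cosh x).mul (diff_prod _ x)).mul (diff_Cf i x)
    · by_cases hlt : (a : ℕ) < (i : ℕ)
      · have : DXi hm a i = fun v => Real.sinh (v ⟨0, hm⟩) *
            (Real.cos (v a) * ∏ e ∈ (FSn m (i : ℕ)).erase a, Real.sin (v e)) * Cf i v := by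
          funext v; rw [DXi, if_neg h0, if_neg ha, if_pos hlt]
        rw [this]
        exact ((diff_eval Real.differentiable_sinh x).mul
          ((diff_eval Real.differentiable_cos x).mul (diff_prod _ x))).mul (diff_Cf i x)
      · by_cases heq : (a : ℕ) = (i : ℕ)
        · have : DXi hm a i = fun v => Real.sinh (v ⟨0, hm⟩) *
              (∏ e ∈ FSn m (i : ℕ), Real.sin (v e)) * (-Real.sin (v a)) := by
            funext v; rw [DXi, if_neg h0, if_neg ha, if_neg hlt, if_pos heq]
          rw [this]
          exact ((diff_eval Real.differentiable_sinh x).mul (diff_prod _ x)).mul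
            (diff_eval Real.differentiable_sin x).neg
        · have : DXi hm a i = fun _ => (0 : ℝ) := by
            funext v; rw [DXi, if_neg h0, if_neg ha, if_neg hlt, if_neg heq]
          rw [this]; exact differentiableAt_const 0

lemma pd_Cf (a : Fin m) (i : Fin (m + 1)) (u : Fin m → ℝ) :
    pd a (Cf i) u = if (a : ℕ) = (i : ℕ) then -Real.sin (u a) else 0 := by
  by_cases h : (i : ℕ) < m
  · have h1 : pd a (Cf i) u = pd a (fun v => Real.cos (v ⟨(i : ℕ), h⟩)) u :=
      pd_congr (fun v => by rw [Cf, dif_pos h]) u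
    rw [h1, pd_eval a ⟨(i : ℕ), h⟩ Real.differentiable_cos u]
    rcases eq_or_ne (a : ℕ) (i : ℕ) with ha | ha
    · have he : a = ⟨(i : ℕ), h⟩ := Fin.ext ha
      rw [if_pos he, if_pos ha, Real.deriv_cos, ← he]
    · rw [if_neg (fun hh => ha (by rw [hh])), if_neg ha]
  · have h1 : pd a (Cf i) u = pd a (fun _ => (1 : ℝ)) u :=
      pd_congr (fun v => by rw [Cf, dif_neg h]) u
    rw [h1, pd_const, if_neg (by have := a.isLt; omega)]

lemma mem_FSn (a : Fin m) (n : ℕ) : a ∈ FSn m n ↔ 1 ≤ (a : ℕ) ∧ (a : ℕ) < n := by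
  simp [FSn]

lemma pd_Xi (hm : 0 < m) (a : Fin m) (i : Fin (m + 1)) (u : Fin m → ℝ) :
    pd a (Xi hm i) u = DXi hm a i u := by
  by_cases hi0 : (i : ℕ) = 0
  · have h1 : pd a (Xi hm i) u = pd a (fun v => Real.cosh (v ⟨0, hm⟩)) u :=
      pd_congr (fun v => by rw [Xi, if_pos hi0]) u
    rw [h1, pd_eval a ⟨0, hm⟩ Real.differentiable_cosh u, DXi, if_pos hi0, Real.deriv_cosh]
    rcases eq_or_ne (a : ℕ) 0 with ha | ha
    · rw [if_pos (Fin.ext ha), if_pos ha]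
    · rw [if_neg (fun hh => ha (by rw [hh])), if_neg ha]
  · have h1 : pd a (Xi hm i) u = pd a (fun v =>
        (Real.sinh (v ⟨0, hm⟩) * ∏ e ∈ FSn m (i : ℕ), Real.sin (v e)) * Cf i v) u :=
      pd_congr (fun v => by rw [Xi, if_neg hi0]) u
    have d1 : DifferentiableAt ℝ (fun v : Fin m → ℝ => Real.sinh (v ⟨0, hm⟩)) u :=
      diff_eval Real.differentiable_sinh u
    have d2 : DifferentiableAt ℝ
        (fun v : Fin m → ℝ => ∏ e ∈ FSn m (i : ℕ), Real.sin (v e)) u := diff_prod _ u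
    have h2 := pd_mul (a := a) (x := u)
      (f := fun v => Real.sinh (v ⟨0, hm⟩) * ∏ e ∈ FSn m (i : ℕ), Real.sin (v e))
      (g := Cf i) (d1.mul d2) (diff_Cf i u)
    have h3 := pd_mul (a := a) (x := u)
      (f := fun v => Real.sinh (v ⟨0, hm⟩))
      (g := fun v => ∏ e ∈ FSn m (i : ℕ), Real.sin (v e)) d1 d2
    rw [h1, h2, h3, pd_eval a ⟨0, hm⟩ Real.differentiable_sinh u, pd_prod a _ u,
      pd_Cf a i u, Real.deriv_sinh, DXi, if_neg hi0]
    rcases eq_or_ne (a : ℕ) 0 with ha0 | ha0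
    · rw [if_pos (Fin.ext ha0), if_pos ha0,
        if_neg (fun hh => by have := ((mem_FSn a _).1 hh).1; omega),
        if_neg (fun hh : (a : ℕ) = (i : ℕ) => by omega)]
      ring
    · rw [if_neg (fun hh : a = ⟨0, hm⟩ => ha0 (by rw [hh])), if_neg ha0]
      rcases Nat.lt_trichotomy (a : ℕ) (i : ℕ) with hlt | heq | hgt
      · rw [if_pos ((mem_FSn a _).2 ⟨by omega, hlt⟩), if_pos hlt,
          if_neg (fun hh : (a : ℕ) = (i : ℕ) => by omega)]
        ring
      · rw [if_neg (fun hh => by have := ((mem_FSn a _).1 hh).2; omega),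
          if_neg (by omega : ¬ (a : ℕ) < (i : ℕ)), if_pos heq, if_pos heq]
        ring
      · rw [if_neg (fun hh => by have := ((mem_FSn a _).1 hh).2; omega),
          if_neg (by omega : ¬ (a : ℕ) < (i : ℕ)),
          if_neg (fun hh : (a : ℕ) = (i : ℕ) => by omega),
          if_neg (fun hh : (a : ℕ) = (i : ℕ) => by omega)]
        ring


open Real Finset

variable {m : ℕ}

-- copied from b.lean (will merge)
lemma telescope (w : ℕ → ℝ) :
    ∀ (n k : ℕ), (∑ j ∈ Finset.Ico k (k + n), (∏ e ∈ Finset.Ico k j, w e) * (1 - w j)) +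
      ∏ e ∈ Finset.Ico k (k + n), w e = 1 := by
  intro n
  induction n with
  | zero => intro k; simp
  | succ n ih =>
    intro k
    have hk : k ≤ k + n := Nat.le_add_right k n
    have h1 : k + (n + 1) = (k + n) + 1 := rfl
    rw [h1, Finset.sum_Ico_succ_top hk, Finset.prod_Ico_succ_top hk]
    have := ih k
    ring_nf
    ring_nf at this
    linarith

noncomputable def sf (u : Fin m → ℝ) (k : ℕ) : ℝ := if h : k < m then Real.sin (u ⟨k, h⟩) else 1
noncomputable def cf (u : Fin m → ℝ) (k : ℕ) : ℝ := if h : k < m then Real.cos (u ⟨k, h⟩) else 1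
noncomputable def Pn (u : Fin m → ℝ) (i : ℕ) : ℝ := ∏ k ∈ Finset.Ico 1 i, sf u k
noncomputable def Pen (u : Fin m → ℝ) (α i : ℕ) : ℝ := ∏ k ∈ (Finset.Ico 1 i).erase α, sf u k

lemma sc_sq (u : Fin m → ℝ) {k : ℕ} (hk : k < m) : sf u k ^ 2 + cf u k ^ 2 = 1 := by
  rw [sf, cf, dif_pos hk, dif_pos hk]
  exact Real.sin_sq_add_cos_sq _

lemma cf_top (u : Fin m → ℝ) : cf u m = 1 := by rw [cf, dif_neg (lt_irrefl m)]

lemma tele2 (u : Fin m → ℝ) {k : ℕ} (hk : k ≤ m) :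
    ∑ i ∈ Finset.Ico k (m + 1), (∏ e ∈ Finset.Ico k i, sf u e ^ 2) * cf u i ^ 2 = 1 := by
  rw [Finset.sum_Ico_succ_top (by omega), cf_top, one_pow, mul_one]
  have h := telescope (fun e => sf u e ^ 2) (m - k) k
  rw [show k + (m - k) = m by omega] at h
  rw [← h]
  congr 1
  apply Finset.sum_congr rfl
  intro j hj
  rw [Finset.mem_Ico] at hj
  have : cf u j ^ 2 = 1 - sf u j ^ 2 := by
    have := sc_sq u hj.2; linarith
  rw [this]

lemma Pen_eq (u : Fin m → ℝ) {α i : ℕ} (hα : 1 ≤ α) (hi : α < i) :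
    Pen u α i = Pn u α * ∏ k ∈ Finset.Ico (α + 1) i, sf u k := by
  have hs : (Finset.Ico 1 i).erase α = Finset.Ico 1 α ∪ Finset.Ico (α + 1) i := by
    ext k
    simp only [Finset.mem_erase, Finset.mem_Ico, Finset.mem_union]
    omega
  rw [Pen, hs, Finset.prod_union (by
    simp only [Finset.disjoint_left, Finset.mem_Ico]; omega), Pn]

noncomputable def sg (i : ℕ) : ℝ := if i = 0 then 1 else -1

noncomputable def xin (hm : 0 < m) (u : Fin m → ℝ) (i : ℕ) : ℝ :=
  if i = 0 then Real.cosh (u ⟨0, hm⟩) else Real.sinh (u ⟨0, hm⟩) * Pn u i * cf u i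

noncomputable def dxin (hm : 0 < m) (u : Fin m → ℝ) (α i : ℕ) : ℝ :=
  if i = 0 then (if α = 0 then Real.sinh (u ⟨0, hm⟩) else 0)
  else if α = 0 then Real.cosh (u ⟨0, hm⟩) * Pn u i * cf u i
  else if α < i then Real.sinh (u ⟨0, hm⟩) * (cf u α * Pen u α i) * cf u i
  else if α = i then Real.sinh (u ⟨0, hm⟩) * Pn u i * (-(sf u α))
  else 0

variable (hm : 0 < m)

lemma quadn (u : Fin m → ℝ) :
    ∑ i ∈ Finset.range (m + 1), sg i * xin hm u i * xin hm u i = 1 := by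
  rw [Finset.range_eq_Ico, Finset.sum_eq_sum_Ico_succ_bot (by omega : 0 < m + 1)]
  have h1 : ∀ i ∈ Finset.Ico 1 (m + 1), sg i * xin hm u i * xin hm u i
      = (-(Real.sinh (u ⟨0, hm⟩) ^ 2)) *
        ((∏ e ∈ Finset.Ico 1 i, sf u e ^ 2) * cf u i ^ 2) := by
    intro i hi
    rw [Finset.mem_Ico] at hi
    rw [sg, xin, if_neg (by omega), if_neg (by omega), Finset.prod_pow, Pn]
    ring
  rw [Finset.sum_congr rfl h1, ← Finset.mul_sum, tele2 u (by omega : 1 ≤ m), mul_one]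
  have h00 : sg 0 * xin hm u 0 * xin hm u 0 = Real.cosh (u ⟨0, hm⟩) ^ 2 := by
    rw [sg, xin, if_pos rfl, if_pos rfl]; ring
  rw [h00]
  linear_combination Real.cosh_sq_sub_sinh_sq (u ⟨0, hm⟩)

lemma metricn_le (u : Fin m → ℝ) {α β : ℕ} (hα : α < m) (hβ : β < m) (hab : α ≤ β) :
    ∑ i ∈ Finset.range (m + 1), sg i * dxin hm u α i * dxin hm u β i =
      -(if α = β then (if α = 0 then 1 else Real.sinh (u ⟨0, hm⟩) ^ 2 * Pn u α ^ 2) else 0) := by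
  rw [Finset.range_eq_Ico, Finset.sum_eq_sum_Ico_succ_bot (by omega : 0 < m + 1)]
  rcases Nat.lt_or_ge α β with hlt | hge
  · -- α < β : result 0
    have hβ1 : 1 ≤ β := by omega
    have h00 : sg 0 * dxin hm u α 0 * dxin hm u β 0 = 0 := by
      have hb : dxin hm u β 0 = 0 := by
        rw [dxin, if_pos rfl, if_neg (by omega : ¬ β = 0)]
      rw [hb, mul_zero]
    rw [h00, zero_add, if_neg (by omega : ¬ α = β), neg_zero]
    -- unified E, Rβ
    obtain ⟨E, Rb, hEβ, hEi⟩ : ∃ E Rb : ℝ,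
        dxin hm u α β = E * Rb * cf u β ∧
        ∀ i, β < i → i ≤ m → dxin hm u α i
          = E * Rb * (sf u β * ∏ e ∈ Finset.Ico (β + 1) i, sf u e) * cf u i := by
      rcases Nat.eq_zero_or_pos α with h0 | h1
      · refine ⟨Real.cosh (u ⟨0, hm⟩), Pn u β, ?_, ?_⟩
        · subst h0
          rw [dxin, if_neg (by omega), if_pos rfl]
        · intro i hi him
          subst h0
          rw [dxin, if_neg (by omega), if_pos rfl]
          have hPn : Pn u i = Pn u β * (sf u β * ∏ e ∈ Finset.Ico (β + 1) i, sf u e) := by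
            rw [Pn, Pn, ← Finset.prod_Ico_consecutive _ (by omega : 1 ≤ β) (by omega : β ≤ i),
              Finset.prod_eq_prod_Ico_succ_bot (by omega : β < i)]
          rw [hPn]; ring
      · refine ⟨Real.sinh (u ⟨0, hm⟩) * cf u α, Pen u α β, ?_, ?_⟩
        · rw [dxin, if_neg (by omega), if_neg (by omega), if_pos hlt]
          ring
        · intro i hi him
          rw [dxin, if_neg (by omega), if_neg (by omega), if_pos (by omega : α < i)]
          have hPe : Pen u α i
              = Pen u α β * (sf u β * ∏ e ∈ Finset.Ico (β + 1) i, sf u e) := by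
            rw [Pen_eq u h1 (by omega : α < i), Pen_eq u h1 hlt,
              ← Finset.prod_Ico_consecutive _ (by omega : α + 1 ≤ β) (by omega : β ≤ i),
              Finset.prod_eq_prod_Ico_succ_bot (by omega : β < i)]
            ring
          rw [hPe]; ring
    -- split sum at β and β+1
    rw [← Finset.sum_Ico_consecutive _ (by omega : 1 ≤ β + 1) (by omega : β + 1 ≤ m + 1),
      Finset.sum_Ico_succ_top (by omega : 1 ≤ β)]
    have hzero : ∀ i ∈ Finset.Ico 1 β, sg i * dxin hm u α i * dxin hm u β i = 0 := by
      intro i hi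
      rw [Finset.mem_Ico] at hi
      have : dxin hm u β i = 0 := by
        rw [dxin, if_neg (by omega), if_neg (by omega), if_neg (by omega), if_neg (by omega)]
      rw [this, mul_zero]
    rw [Finset.sum_eq_zero hzero, zero_add]
    have hββ : dxin hm u β β = Real.sinh (u ⟨0, hm⟩) * Pn u β * (-(sf u β)) := by
      rw [dxin, if_neg (by omega), if_neg (by omega), if_neg (by omega), if_pos rfl]
    have htop : ∀ i ∈ Finset.Ico (β + 1) (m + 1), sg i * dxin hm u α i * dxin hm u β i
        = (-(E * Rb * Real.sinh (u ⟨0, hm⟩) * cf u β * Pn u β * sf u β)) *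
          ((∏ e ∈ Finset.Ico (β + 1) i, sf u e ^ 2) * cf u i ^ 2) := by
      intro i hi
      rw [Finset.mem_Ico] at hi
      rw [sg, if_neg (by omega), hEi i (by omega) (by omega)]
      have hdβ : dxin hm u β i = Real.sinh (u ⟨0, hm⟩) *
          (cf u β * (Pn u β * ∏ e ∈ Finset.Ico (β + 1) i, sf u e)) * cf u i := by
        rw [dxin, if_neg (by omega), if_neg (by omega), if_pos (by omega : β < i),
          Pen_eq u hβ1 (by omega : β < i)]
      rw [hdβ, Finset.prod_pow]
      ring
    rw [Finset.sum_congr rfl htop, ← Finset.mul_sum, tele2 u (by omega : β + 1 ≤ m), mul_one,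
      hEβ, hββ, sg, if_neg (by omega : ¬ β = 0)]
    ring
  · -- α = β
    have heq : α = β := le_antisymm hab hge
    subst heq
    rw [if_pos rfl]
    rcases Nat.eq_zero_or_pos α with h0 | h1
    · -- α = β = 0
      subst h0
      rw [if_pos rfl]
      have h00 : sg 0 * dxin hm u 0 0 * dxin hm u 0 0 = Real.sinh (u ⟨0, hm⟩) ^ 2 := by
        rw [sg, dxin, if_pos rfl, if_pos rfl, if_pos rfl]
        ring
      have h1 : ∀ i ∈ Finset.Ico 1 (m + 1), sg i * dxin hm u 0 i * dxin hm u 0 i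
          = (-(Real.cosh (u ⟨0, hm⟩) ^ 2)) *
            ((∏ e ∈ Finset.Ico 1 i, sf u e ^ 2) * cf u i ^ 2) := by
        intro i hi
        rw [Finset.mem_Ico] at hi
        rw [sg, if_neg (by omega), dxin, if_neg (by omega), if_pos rfl, Finset.prod_pow, Pn]
        ring
      rw [h00, Finset.sum_congr rfl h1, ← Finset.mul_sum, tele2 u (by omega : 1 ≤ m), mul_one]
      linear_combination -Real.cosh_sq_sub_sinh_sq (u ⟨0, hm⟩)
    · -- α = β ≥ 1
      rw [if_neg (by omega : ¬ α = 0)]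
      have h00 : sg 0 * dxin hm u α 0 * dxin hm u α 0 = 0 := by
        rw [dxin, if_pos rfl, if_neg (by omega : ¬ α = 0)]
        ring
      rw [h00, zero_add,
        ← Finset.sum_Ico_consecutive _ (by omega : 1 ≤ α + 1) (by omega : α + 1 ≤ m + 1),
        Finset.sum_Ico_succ_top (by omega : 1 ≤ α)]
      have hzero : ∀ i ∈ Finset.Ico 1 α, sg i * dxin hm u α i * dxin hm u α i = 0 := by
        intro i hi
        rw [Finset.mem_Ico] at hi
        have : dxin hm u α i = 0 := by
          rw [dxin, if_neg (by omega), if_neg (by omega), if_neg (by omega), if_neg (by omega)]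
        rw [this, mul_zero]
      rw [Finset.sum_eq_zero hzero, zero_add]
      have hαα : sg α * dxin hm u α α * dxin hm u α α
          = (-1) * (Real.sinh (u ⟨0, hm⟩) ^ 2 * Pn u α ^ 2 * sf u α ^ 2) := by
        rw [sg, if_neg (by omega), dxin, if_neg (by omega), if_neg (by omega),
          if_neg (by omega), if_pos rfl]
        ring
      have htop : ∀ i ∈ Finset.Ico (α + 1) (m + 1), sg i * dxin hm u α i * dxin hm u α i
          = (-(Real.sinh (u ⟨0, hm⟩) ^ 2 * cf u α ^ 2 * Pn u α ^ 2)) *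
            ((∏ e ∈ Finset.Ico (α + 1) i, sf u e ^ 2) * cf u i ^ 2) := by
        intro i hi
        rw [Finset.mem_Ico] at hi
        rw [sg, if_neg (by omega), dxin, if_neg (by omega), if_neg (by omega),
          if_pos (by omega : α < i), Pen_eq u h1 (by omega : α < i), Finset.prod_pow]
        ring
      rw [hαα, Finset.sum_congr rfl htop, ← Finset.mul_sum, tele2 u (by omega : α + 1 ≤ m),
        mul_one]
      linear_combination (-(Real.sinh (u ⟨0, hm⟩) ^ 2 * Pn u α ^ 2)) * sc_sq u hα

lemma metricn (u : Fin m → ℝ) {α β : ℕ} (hα : α < m) (hβ : β < m) :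
    ∑ i ∈ Finset.range (m + 1), sg i * dxin hm u α i * dxin hm u β i =
      -(if α = β then (if α = 0 then 1 else Real.sinh (u ⟨0, hm⟩) ^ 2 * Pn u α ^ 2) else 0) := by
  rcases le_or_gt α β with h | h
  · exact metricn_le hm u hα hβ h
  · have hsym : ∑ i ∈ Finset.range (m + 1), sg i * dxin hm u α i * dxin hm u β i
        = ∑ i ∈ Finset.range (m + 1), sg i * dxin hm u β i * dxin hm u α i := by
      apply Finset.sum_congr rfl; intro i _; ring
    rw [hsym, metricn_le hm u hβ hα (by omega)]
    have h1 : ¬ α = β := by omega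
    have h2 : ¬ β = α := by omega
    rw [if_neg h1, if_neg h2]


/-! conversions between Fin-level and ℕ-level -/

lemma sf_coe (u : Fin m → ℝ) (e : Fin m) : sf u (e : ℕ) = Real.sin (u e) := by
  rw [sf, dif_pos e.isLt, Fin.eta]

lemma cf_coe (u : Fin m → ℝ) (e : Fin m) : cf u (e : ℕ) = Real.cos (u e) := by
  rw [cf, dif_pos e.isLt, Fin.eta]

lemma Cf_eq (i : Fin (m + 1)) (u : Fin m → ℝ) : Cf i u = cf u (i : ℕ) := rfl

lemma prod_FSn (u : Fin m → ℝ) {n : ℕ} (hn : n ≤ m) :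
    ∏ e ∈ FSn m n, Real.sin (u e) = Pn u n := by
  have h1 : ∏ e ∈ FSn m n, Real.sin (u e) = ∏ e ∈ FSn m n, sf u (e : ℕ) :=
    Finset.prod_congr rfl (fun e _ => (sf_coe u e).symm)
  rw [h1, FSn, Finset.prod_filter,
    Fin.prod_univ_eq_prod_range (fun k => if 1 ≤ k ∧ k < n then sf u k else 1) m,
    ← Finset.prod_filter]
  rw [Pn]
  congr 1
  ext k
  simp only [Finset.mem_filter, Finset.mem_range, Finset.mem_Ico]
  omega

lemma prod_FSn_sq (u : Fin m → ℝ) {n : ℕ} (hn : n ≤ m) :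
    ∏ e ∈ FSn m n, Real.sin (u e) ^ 2 = Pn u n ^ 2 := by
  rw [Finset.prod_pow, prod_FSn u hn]

lemma prod_FSn_erase (u : Fin m → ℝ) {n : ℕ} (hn : n ≤ m) (a : Fin m) :
    ∏ e ∈ (FSn m n).erase a, Real.sin (u e) = Pen u (a : ℕ) n := by
  have hset : (FSn m n).erase a =
      Finset.univ.filter (fun e : Fin m => (1 ≤ (e : ℕ) ∧ (e : ℕ) < n) ∧ ¬ (e : ℕ) = (a : ℕ)) := by
    ext e
    simp only [Finset.mem_erase, FSn, Finset.mem_filter, Finset.mem_univ, true_and, Ne,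
      Fin.ext_iff]
    tauto
  have h1 : ∏ e ∈ (FSn m n).erase a, Real.sin (u e)
      = ∏ e ∈ (FSn m n).erase a, sf u (e : ℕ) :=
    Finset.prod_congr rfl (fun e _ => (sf_coe u e).symm)
  rw [h1, hset, Finset.prod_filter,
    Fin.prod_univ_eq_prod_range
      (fun k => if (1 ≤ k ∧ k < n) ∧ ¬ k = (a : ℕ) then sf u k else 1) m,
    ← Finset.prod_filter]
  rw [Pen]
  congr 1
  ext k
  simp only [Finset.mem_filter, Finset.mem_range, Finset.mem_erase, Finset.mem_Ico]
  omega

lemma XiConv (hm : 0 < m) (i : Fin (m + 1)) (u : Fin m → ℝ) :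
    Xi hm i u = xin hm u (i : ℕ) := by
  by_cases hi : (i : ℕ) = 0
  · rw [Xi, xin, if_pos hi, if_pos hi]
  · rw [Xi, xin, if_neg hi, if_neg hi, prod_FSn u (Nat.lt_succ_iff.mp i.isLt), Cf_eq]

lemma DXiConv (hm : 0 < m) (a : Fin m) (i : Fin (m + 1)) (u : Fin m → ℝ) :
    DXi hm a i u = dxin hm u (a : ℕ) (i : ℕ) := by
  have him : (i : ℕ) ≤ m := Nat.lt_succ_iff.mp i.isLt
  by_cases h0 : (i : ℕ) = 0
  · rw [DXi, dxin, if_pos h0, if_pos h0]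
  · rw [DXi, dxin, if_neg h0, if_neg h0]
    by_cases ha : (a : ℕ) = 0
    · rw [if_pos ha, if_pos ha, prod_FSn u him, Cf_eq]
    · rw [if_neg ha, if_neg ha]
      by_cases hlt : (a : ℕ) < (i : ℕ)
      · rw [if_pos hlt, if_pos hlt, prod_FSn_erase u him, Cf_eq, cf_coe]
      · rw [if_neg hlt, if_neg hlt]
        by_cases heq : (a : ℕ) = (i : ℕ)
        · rw [if_pos heq, if_pos heq, prod_FSn u him, sf_coe]
        · rw [if_neg heq, if_neg heq]

noncomputable def Gv (hm : 0 < m) (a b : Fin m) (u : Fin m → ℝ) : ℝ :=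
  if a = b then
    (if (a : ℕ) = 0 then 1 else Real.sinh (u ⟨0, hm⟩) ^ 2 *
      ∏ e' ∈ Finset.univ.filter (fun e' : Fin m => 1 ≤ (e' : ℕ) ∧ (e' : ℕ) < (a : ℕ)),
        Real.sin (u e') ^ 2)
  else 0

lemma GvConv (hm : 0 < m) (a b : Fin m) (u : Fin m → ℝ) :
    Gv hm a b u = if (a : ℕ) = (b : ℕ) then
      (if (a : ℕ) = 0 then 1 else Real.sinh (u ⟨0, hm⟩) ^ 2 * Pn u (a : ℕ) ^ 2) else 0 := by
  rw [Gv]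
  rcases eq_or_ne a b with h | h
  · subst h
    rw [if_pos rfl, if_pos rfl]
    by_cases h0 : (a : ℕ) = 0
    · rw [if_pos h0, if_pos h0]
    · rw [if_neg h0, if_neg h0, ← prod_FSn_sq u (le_of_lt a.isLt)]
      rfl
  · rw [if_neg h, if_neg (fun hh => h (Fin.ext hh))]

lemma quadF (hm : 0 < m) (u : Fin m → ℝ) :
    ∑ i : Fin (m + 1), sg (i : ℕ) * (Xi hm i u * Xi hm i u) = 1 := by
  have h1 : ∀ i : Fin (m + 1), sg (i : ℕ) * (Xi hm i u * Xi hm i u)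
      = (fun k => sg k * xin hm u k * xin hm u k) (i : ℕ) := by
    intro i; rw [XiConv]; ring
  rw [Finset.sum_congr rfl (fun i _ => h1 i),
    Fin.sum_univ_eq_sum_range (fun k => sg k * xin hm u k * xin hm u k) (m + 1), quadn hm u]

lemma metricF (hm : 0 < m) (a b : Fin m) (u : Fin m → ℝ) :
    ∑ i : Fin (m + 1), sg (i : ℕ) * (DXi hm a i u * DXi hm b i u) = -(Gv hm a b u) := by
  have h1 : ∀ i : Fin (m + 1), sg (i : ℕ) * (DXi hm a i u * DXi hm b i u)
      = (fun k => sg k * dxin hm u (a : ℕ) k * dxin hm u (b : ℕ) k) (i : ℕ) := by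
    intro i; rw [DXiConv, DXiConv]; ring
  rw [Finset.sum_congr rfl (fun i _ => h1 i),
    Fin.sum_univ_eq_sum_range (fun k => sg k * dxin hm u (a : ℕ) k * dxin hm u (b : ℕ) k) (m + 1),
    metricn hm u a.isLt b.isLt, GvConv]

end S18

/-- for the hyperboloid model, the normal vectors are
`B_κ^i = −(1/r)θ^i`, `B_{κi} = (1/r†)η_i`, so the model is a dual quadric hypersurface
with `k_0 l_0 = −1/(r r†)`; consequently `H^{(1)}_{abκ} = −(1/r†) g_{ab}`,
`H^{(−1)}_{abκ} = (1/r) g_{ab}`, and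
`R^{(±1)}_{abcd} = −(1/(r r†))(g_{ad}g_{bc} − g_{ac}g_{bd})`, with `g_{11} = r r†` and
`g_{ab} = δ_{ab} r r† sinh² u^1 ∏_{2≤c≤a} sin² u^{c−1}`. -/
theorem stmt18 {m : ℕ} (hm : 0 < m) (r rd : ℝ) (hr : 0 < r) (hrd : 1 < rd)
    (ξ : Fin (m + 1) → (Fin m → ℝ) → ℝ)
    (hξ : ∀ i u, ξ i u =
      if (i : ℕ) = 0 then Real.cosh (u ⟨0, hm⟩)
      else Real.sinh (u ⟨0, hm⟩) *
        (∏ e ∈ Finset.univ.filter (fun e : Fin m => 1 ≤ (e : ℕ) ∧ (e : ℕ) < (i : ℕ)),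
          Real.sin (u e)) *
        (if h : (i : ℕ) < m then Real.cos (u ⟨i, h⟩) else 1))
    (θ η : Fin (m + 1) → (Fin m → ℝ) → ℝ)
    (hθ : ∀ i u, θ i u = (if (i : ℕ) = 0 then -r else r) * ξ i u)
    (hη : ∀ i u, η i u = rd * ξ i u)
    (Bk Bkd : Fin (m + 1) → (Fin m → ℝ) → ℝ)
    (hBk : ∀ i u, Bk i u = if (i : ℕ) = 0 then ξ i u else -ξ i u)
    (hBkd : ∀ i u, Bkd i u = ξ i u)
    (g H1 Hm1 : Fin m → Fin m → (Fin m → ℝ) → ℝ)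
    (hg : ∀ a b u, g a b u = ∑ i, pd a (θ i) u * pd b (η i) u)
    (hH1 : ∀ a b u, H1 a b u = ∑ i, pd a (fun v => pd b (θ i) v) u * Bkd i u)
    (hHm1 : ∀ a b u, Hm1 a b u = ∑ i, pd a (fun v => pd b (η i) v) u * Bk i u) :
    ∀ (a b c e : Fin m) (i : Fin (m + 1)) (u : Fin m → ℝ),
      Bk i u = -(1 / r) * θ i u ∧
      Bkd i u = (1 / rd) * η i u ∧
      (∑ j, Bk j u * pd a (η j) u = 0) ∧
      (∑ j, Bkd j u * pd a (θ j) u = 0) ∧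
      (∑ j, Bk j u * Bkd j u = 1) ∧
      g a b u = (if a = b then
        r * rd * (if (a : ℕ) = 0 then 1 else Real.sinh (u ⟨0, hm⟩) ^ 2 *
          ∏ e' ∈ Finset.univ.filter (fun e' : Fin m => 1 ≤ (e' : ℕ) ∧ (e' : ℕ) < (a : ℕ)),
            Real.sin (u e') ^ 2) else 0) ∧
      H1 a b u = -(1 / rd) * g a b u ∧
      Hm1 a b u = (1 / r) * g a b u ∧
      Hm1 a e u * H1 b c u - Hm1 b e u * H1 a c u
        = -(1 / (r * rd)) * (g a e u * g b c u - g a c u * g b e u) := by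
  have hXiEq : ξ = S18.Xi hm := by
    funext i u
    rw [hξ]
    rfl
  subst hXiEq
  have hrne : r ≠ 0 := ne_of_gt hr
  have hrdne : rd ≠ 0 := ne_of_gt (by linarith)
  have hdX := S18.diff_Xi hm
  have hpdX := S18.pd_Xi hm
  have hdD := S18.diff_DXi hm
  -- first-derivative identity (differentiate the quadric constraint)
  have hE : ∀ (a : Fin m) (x : Fin m → ℝ),
      ∑ i : Fin (m + 1), S18.sg (i : ℕ) * (S18.Xi hm i x * S18.DXi hm a i x) = 0 := by
    intro a x
    have h0 : pd a (fun v => ∑ i : Fin (m + 1),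
        S18.sg (i : ℕ) * (S18.Xi hm i v * S18.Xi hm i v)) x = 0 := by
      rw [S18.pd_congr (g := fun _ => (1 : ℝ)) (fun v => S18.quadF hm v) x]
      exact S18.pd_const a 1 x
    rw [S18.pd_sum (F := fun (i : Fin (m + 1)) v => S18.sg (i : ℕ) * (S18.Xi hm i v * S18.Xi hm i v))
      (fun i _ => ((hdX i x).mul (hdX i x)).const_mul _)] at h0
    have hterm : ∀ i : Fin (m + 1),
        pd a (fun v => S18.sg (i : ℕ) * (S18.Xi hm i v * S18.Xi hm i v)) x
        = S18.sg (i : ℕ) * (S18.DXi hm a i x * S18.Xi hm i x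
            + S18.Xi hm i x * S18.DXi hm a i x) := by
      intro i
      rw [S18.pd_const_mul (f := fun v => S18.Xi hm i v * S18.Xi hm i v) ((hdX i x).mul (hdX i x)),
        S18.pd_mul (hdX i x) (hdX i x), hpdX]
    rw [Finset.sum_congr rfl (fun i _ => hterm i)] at h0
    have h2 : ∑ i : Fin (m + 1), S18.sg (i : ℕ) * (S18.DXi hm a i x * S18.Xi hm i x
          + S18.Xi hm i x * S18.DXi hm a i x)
        = 2 * ∑ i : Fin (m + 1), S18.sg (i : ℕ) * (S18.Xi hm i x * S18.DXi hm a i x) := by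
      rw [Finset.mul_sum]
      exact Finset.sum_congr rfl (fun i _ => by ring)
    rw [h2] at h0
    linarith
  -- second-derivative identity
  have hE2 : ∀ (a b : Fin m) (x : Fin m → ℝ),
      ∑ i : Fin (m + 1), S18.sg (i : ℕ) * (S18.Xi hm i x * pd a (S18.DXi hm b i) x)
        = S18.Gv hm a b x := by
    intro a b x
    have h0 : pd a (fun v => ∑ i : Fin (m + 1),
        S18.sg (i : ℕ) * (S18.Xi hm i v * S18.DXi hm b i v)) x = 0 := by
      rw [S18.pd_congr (g := fun _ => (0 : ℝ)) (fun v => hE b v) x]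
      exact S18.pd_const a 0 x
    rw [S18.pd_sum (F := fun (i : Fin (m + 1)) v => S18.sg (i : ℕ) * (S18.Xi hm i v * S18.DXi hm b i v))
      (fun i _ => ((hdX i x).mul (hdD b i x)).const_mul _)] at h0
    have hterm : ∀ i : Fin (m + 1),
        pd a (fun v => S18.sg (i : ℕ) * (S18.Xi hm i v * S18.DXi hm b i v)) x
        = S18.sg (i : ℕ) * (S18.DXi hm a i x * S18.DXi hm b i x)
            + S18.sg (i : ℕ) * (S18.Xi hm i x * pd a (S18.DXi hm b i) x) := by
      intro i
      rw [S18.pd_const_mul (f := fun v => S18.Xi hm i v * S18.DXi hm b i v)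
        ((hdX i x).mul (hdD b i x)), S18.pd_mul (hdX i x) (hdD b i x), hpdX]
      ring
    rw [Finset.sum_congr rfl (fun i _ => hterm i), Finset.sum_add_distrib,
      S18.metricF hm a b x] at h0
    linarith
  -- derivative values of θ and η
  have hpdθ : ∀ (a : Fin m) (j : Fin (m + 1)) (x : Fin m → ℝ),
      pd a (θ j) x = (if (j : ℕ) = 0 then -r else r) * S18.DXi hm a j x := by
    intro a j x
    rw [S18.pd_congr (f := θ j)
      (g := fun v => (if (j : ℕ) = 0 then -r else r) * S18.Xi hm j v) (fun v => hθ j v) x,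
      S18.pd_const_mul (hdX j x), hpdX]
  have hpdη : ∀ (a : Fin m) (j : Fin (m + 1)) (x : Fin m → ℝ),
      pd a (η j) x = rd * S18.DXi hm a j x := by
    intro a j x
    rw [S18.pd_congr (f := η j) (g := fun v => rd * S18.Xi hm j v) (fun v => hη j v) x,
      S18.pd_const_mul (hdX j x), hpdX]
  have hpd2θ : ∀ (a b : Fin m) (j : Fin (m + 1)) (x : Fin m → ℝ),
      pd a (fun v => pd b (θ j) v) x
        = (if (j : ℕ) = 0 then -r else r) * pd a (S18.DXi hm b j) x := by
    intro a b j x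
    rw [S18.pd_congr (f := fun v => pd b (θ j) v)
      (g := fun v => (if (j : ℕ) = 0 then -r else r) * S18.DXi hm b j v)
      (fun v => hpdθ b j v) x, S18.pd_const_mul (hdD b j x)]
  have hpd2η : ∀ (a b : Fin m) (j : Fin (m + 1)) (x : Fin m → ℝ),
      pd a (fun v => pd b (η j) v) x = rd * pd a (S18.DXi hm b j) x := by
    intro a b j x
    rw [S18.pd_congr (f := fun v => pd b (η j) v)
      (g := fun v => rd * S18.DXi hm b j v) (fun v => hpdη b j v) x,
      S18.pd_const_mul (hdD b j x)]
  intro a b c e i u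
  -- value lemmas at this u
  have hgv : ∀ (a b : Fin m), g a b u = r * rd * S18.Gv hm a b u := by
    intro a b
    rw [hg]
    have h1 : ∀ j : Fin (m + 1), pd a (θ j) u * pd b (η j) u
        = (-(r * rd)) * (S18.sg (j : ℕ) * (S18.DXi hm a j u * S18.DXi hm b j u)) := by
      intro j
      rw [hpdθ, hpdη, S18.sg]
      by_cases hj : (j : ℕ) = 0
      · rw [if_pos hj, if_pos hj]; ring
      · rw [if_neg hj, if_neg hj]; ring
    rw [Finset.sum_congr rfl (fun j _ => h1 j), ← Finset.mul_sum, S18.metricF hm a b u]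
    ring
  have hH1v : ∀ (a b : Fin m), H1 a b u = -r * S18.Gv hm a b u := by
    intro a b
    rw [hH1]
    have h1 : ∀ j : Fin (m + 1), pd a (fun v => pd b (θ j) v) u * Bkd j u
        = (-r) * (S18.sg (j : ℕ) * (S18.Xi hm j u * pd a (S18.DXi hm b j) u)) := by
      intro j
      rw [hpd2θ, hBkd, S18.sg]
      by_cases hj : (j : ℕ) = 0
      · rw [if_pos hj, if_pos hj]; ring
      · rw [if_neg hj, if_neg hj]; ring
    rw [Finset.sum_congr rfl (fun j _ => h1 j), ← Finset.mul_sum, hE2 a b u]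
  have hHm1v : ∀ (a b : Fin m), Hm1 a b u = rd * S18.Gv hm a b u := by
    intro a b
    rw [hHm1]
    have h1 : ∀ j : Fin (m + 1), pd a (fun v => pd b (η j) v) u * Bk j u
        = rd * (S18.sg (j : ℕ) * (S18.Xi hm j u * pd a (S18.DXi hm b j) u)) := by
      intro j
      rw [hpd2η, hBk, S18.sg]
      by_cases hj : (j : ℕ) = 0
      · rw [if_pos hj, if_pos hj]; ring
      · rw [if_neg hj, if_neg hj]; ring
    rw [Finset.sum_congr rfl (fun j _ => h1 j), ← Finset.mul_sum, hE2 a b u]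
  refine ⟨?_, ?_, ?_, ?_, ?_, ?_, ?_, ?_, ?_⟩
  · rw [hBk, hθ]
    by_cases hi : (i : ℕ) = 0
    · rw [if_pos hi, if_pos hi]
      field_simp
    · rw [if_neg hi, if_neg hi]
      field_simp
  · rw [hBkd, hη]
    field_simp
  · have h1 : ∀ j : Fin (m + 1), Bk j u * pd a (η j) u
        = rd * (S18.sg (j : ℕ) * (S18.Xi hm j u * S18.DXi hm a j u)) := by
      intro j
      rw [hBk, hpdη, S18.sg]
      by_cases hj : (j : ℕ) = 0
      · rw [if_pos hj, if_pos hj]; ring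
      · rw [if_neg hj, if_neg hj]; ring
    rw [Finset.sum_congr rfl (fun j _ => h1 j), ← Finset.mul_sum, hE a u, mul_zero]
  · have h1 : ∀ j : Fin (m + 1), Bkd j u * pd a (θ j) u
        = (-r) * (S18.sg (j : ℕ) * (S18.Xi hm j u * S18.DXi hm a j u)) := by
      intro j
      rw [hBkd, hpdθ, S18.sg]
      by_cases hj : (j : ℕ) = 0
      · rw [if_pos hj, if_pos hj]; ring
      · rw [if_neg hj, if_neg hj]; ring
    rw [Finset.sum_congr rfl (fun j _ => h1 j), ← Finset.mul_sum, hE a u, mul_zero]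
  · have h1 : ∀ j : Fin (m + 1), Bk j u * Bkd j u
        = S18.sg (j : ℕ) * (S18.Xi hm j u * S18.Xi hm j u) := by
      intro j
      rw [hBk, hBkd, S18.sg]
      by_cases hj : (j : ℕ) = 0
      · rw [if_pos hj, if_pos hj]; ring
      · rw [if_neg hj, if_neg hj]; ring
    rw [Finset.sum_congr rfl (fun j _ => h1 j), S18.quadF hm u]
  · rw [hgv a b]
    simp only [S18.Gv]
    split_ifs <;> ring
  · rw [hH1v a b, hgv a b]
    field_simp
  · rw [hHm1v a b, hgv a b]
    field_simp
  · rw [hHm1v a e, hH1v b c, hHm1v b e, hH1v a c, hgv a e, hgv b c, hgv b e, hgv a c]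
    field_simp
    ring
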